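/- For real numbers λ₁,…,λₙ (n > 1), defining H_r = (n choose r)⁻¹ · σ_r(λ₁,…,λₙ) where σ_r is the r-th elementary symmetric polynomial, one has H_r² ≥ H_{r-1} · H_{r+1} for all 1 ≤ r < n. -/

import Mathlib

open Polynomial

lemma ms_esymm_zero (s : Multiset ℝ) : s.esymm 0 = 1 := by
  simp [Multiset.esymm, Multiset.powersetCard_zero_left]

lemma ms_esymm_of_lt (s : Multiset ℝ) {k : ℕ} (h : Multiset.card s < k) : s.esymm k = 0 := by
  simp [Multiset.esymm, Multiset.powersetCard_eq_empty _ h]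

lemma ms_esymm_cons (a : ℝ) (s : Multiset ℝ) (k : ℕ) :
    (a ::ₘ s).esymm (k + 1) = a * s.esymm k + s.esymm (k + 1) := by
  rw [Multiset.esymm, Multiset.powersetCard_cons, Multiset.map_add, Multiset.sum_add,
    Multiset.map_map, add_comm]
  congr 1
  rw [Multiset.esymm, ← Multiset.sum_map_mul_left]
  apply congrArg
  apply Multiset.map_congr rfl
  intro t _
  simp [Multiset.prod_cons]

lemma ms_esymm_one (s : Multiset ℝ) : s.esymm 1 = s.sum := by
  induction s using Multiset.induction_on with
  | empty => rw [ms_esymm_of_lt (k := 1) 0 (by simp)]; simp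
  | cons a s ih => rw [Multiset.sum_cons, ms_esymm_cons, ms_esymm_zero, ih]; ring

lemma ms_esymm_card (s : Multiset ℝ) : s.esymm (Multiset.card s) = s.prod := by
  induction s using Multiset.induction_on with
  | empty => simp [ms_esymm_zero]
  | cons a s ih =>
    rw [Multiset.card_cons, Multiset.prod_cons, ms_esymm_cons, ih,
      ms_esymm_of_lt s (by omega)]
    ring

lemma ms_sq_sum (s : Multiset ℝ) :
    s.sum ^ 2 = (s.map (fun x => x ^ 2)).sum + 2 * s.esymm 2 := by
  induction s using Multiset.induction_on with
  | empty => rw [ms_esymm_of_lt (k := 2) 0 (by simp)]; simp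
  | cons a s ih =>
    rw [Multiset.sum_cons, Multiset.map_cons, Multiset.sum_cons, ms_esymm_cons, ms_esymm_one]
    nlinarith [ih]

lemma ms_cauchy (s : Multiset ℝ) :
    s.sum ^ 2 ≤ (Multiset.card s : ℝ) * (s.map (fun x => x ^ 2)).sum := by
  induction s using Multiset.induction_on with
  | empty => simp
  | cons a s ih =>
    rcases eq_or_ne s 0 with rfl | hs0
    · simp
    · have hc1 : 1 ≤ (Multiset.card s : ℝ) := by
        have := Multiset.card_pos.mpr hs0
        exact_mod_cast this
      rw [Multiset.sum_cons, Multiset.map_cons, Multiset.sum_cons, Multiset.card_cons]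
      push_cast
      set c : ℝ := (Multiset.card s : ℝ)
      set S : ℝ := s.sum
      set Q : ℝ := (s.map (fun x => x ^ 2)).sum
      have key : c * ((c+1) * (a^2 + Q) - (a + S)^2) = (c*a - S)^2 + (c+1)*(c*Q - S^2) := by
        ring
      nlinarith [sq_nonneg (c*a - S), key, mul_pos (by linarith : (0:ℝ) < c+1)
        (by linarith : (0:ℝ) < c)]

lemma ms_reflect (s : Multiset ℝ) (h0 : (0:ℝ) ∉ s) :
    ∀ k ≤ Multiset.card s,
      s.prod * ((s.map (fun x => x⁻¹)).esymm k) = s.esymm (Multiset.card s - k) := by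
  induction s using Multiset.induction_on with
  | empty =>
    intro k hk
    have : k = 0 := Nat.le_zero.mp (by simpa using hk)
    subst this
    simp [ms_esymm_zero]
  | cons a s ih =>
    intro k hk
    have ha : a ≠ 0 := fun h => h0 (h ▸ Multiset.mem_cons_self a s)
    have hinv : a * a⁻¹ = 1 := mul_inv_cancel₀ ha
    have h0s : (0:ℝ) ∉ s := fun h => h0 (Multiset.mem_cons_of_mem h)
    rw [Multiset.card_cons] at hk ⊢
    rw [Multiset.prod_cons, Multiset.map_cons]
    match k with
    | 0 =>
      rw [ms_esymm_zero, Nat.sub_zero, ← Multiset.card_cons, ms_esymm_card,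
        Multiset.prod_cons, mul_one]
    | (j+1) =>
      rw [ms_esymm_cons]
      rcases Nat.lt_or_ge j (Multiset.card s) with hj | hj
      · have e1 := ih h0s j (le_of_lt hj)
        have e2 := ih h0s (j+1) hj
        have hcs : Multiset.card s + 1 - (j + 1) = (Multiset.card s - (j+1)) + 1 := by omega
        rw [hcs, ms_esymm_cons]
        have hcs2 : Multiset.card s - (j + 1) + 1 = Multiset.card s - j := by omega
        rw [hcs2]
        linear_combination e1 + a * e2 +
          (s.prod * ((s.map (fun x => x⁻¹)).esymm j)) * hinv
      · have hj' : j = Multiset.card s := by omega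
        subst hj'
        rw [ms_esymm_of_lt (s.map fun x => x⁻¹)
          (show Multiset.card (s.map fun x => x⁻¹) < Multiset.card s + 1 by simp),
          Nat.sub_self, ms_esymm_zero]
        have e1 := ih h0s (Multiset.card s) le_rfl
        rw [Nat.sub_self, ms_esymm_zero] at e1
        linear_combination (s.prod * ((s.map (fun x => x⁻¹)).esymm (Multiset.card s))) * hinv + e1

lemma two_mul_choose_two (m : ℕ) : 2 * m.choose 2 = m * (m - 1) := by
  induction m with
  | zero => rfl
  | succ n ih =>
    rw [Nat.choose_succ_succ, Nat.choose_one_right, Nat.mul_add, ih, Nat.succ_sub_one]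
    cases n with
    | zero => rfl
    | succ k => rw [Nat.succ_sub_one]; ring

lemma deriv_esymm (s : Multiset ℝ) (m : ℕ) (hs : Multiset.card s = m) (hm : 2 ≤ m) :
    ∃ t : Multiset ℝ, Multiset.card t = m - 1 ∧
      ∀ j ≤ m - 1, (m:ℝ) * t.esymm j = ((m - j : ℕ):ℝ) * s.esymm j := by
  set p : ℝ[X] := (s.map fun a => X + C a).prod with hp
  have hmonic : p.Monic :=
    monic_multiset_prod_of_monic _ _ fun a _ => monic_X_add_C a
  have hdeg : p.natDegree = m := by
    rw [hp, natDegree_multiset_prod_of_monic _ (by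
      intro f hf
      obtain ⟨a, _, rfl⟩ := Multiset.mem_map.mp hf
      exact monic_X_add_C a)]
    rw [Multiset.map_map]
    have : (Multiset.map (natDegree ∘ fun a => X + C a) s) = s.map (fun _ => 1) := by
      apply Multiset.map_congr rfl
      intro a _
      simp [natDegree_X_add_C]
    rw [this, Multiset.map_const', Multiset.sum_replicate, hs, smul_eq_mul, mul_one]
  have hcoeff : ∀ k ≤ m, p.coeff k = s.esymm (m - k) := by
    intro k hk
    rw [hp, Multiset.prod_X_add_C_coeff s (by omega : k ≤ Multiset.card s), hs]
  have hrootsp : p.roots = s.map Neg.neg := by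
    have hmm : (s.map fun a => X + C a) = ((s.map Neg.neg).map fun a => X - C a) := by
      rw [Multiset.map_map]
      apply Multiset.map_congr rfl
      intro a _
      simp
    rw [hp, hmm, roots_multiset_prod_X_sub_C]
  have hcardp : Multiset.card p.roots = m := by rw [hrootsp, Multiset.card_map, hs]
  set u := derivative p with hu
  have hucoeff : ∀ k, u.coeff k = p.coeff (k + 1) * (k + 1) := fun k => coeff_derivative p k
  have hpm : p.coeff m = 1 := by
    have := hmonic.coeff_natDegree
    rwa [hdeg] at this
  have hutop : u.coeff (m - 1) = (m : ℝ) := by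
    rw [hucoeff, show m - 1 + 1 = m by omega, hpm, one_mul,
      Nat.cast_sub (by omega : 1 ≤ m)]
    ring
  have hune : u ≠ 0 := by
    intro h
    rw [h, coeff_zero] at hutop
    have : (m:ℝ) ≠ 0 := by positivity
    exact this hutop.symm
  have hudeg_le : u.natDegree ≤ m - 1 := by
    have := natDegree_derivative_lt (p := p) (by omega)
    rw [← hu] at this
    omega
  have hcardu : Multiset.card u.roots = m - 1 := by
    have h1 : Multiset.card u.roots ≤ m - 1 := le_trans (card_roots' u) hudeg_le
    have h2 := Polynomial.card_roots_le_derivative p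
    rw [hcardp, ← hu] at h2
    omega
  have hundeg : u.natDegree = m - 1 := by
    have := le_natDegree_of_ne_zero (n := m - 1) (p := u) (by rw [hutop]; positivity)
    omega
  have hulc : u.leadingCoeff = (m : ℝ) := by rw [leadingCoeff, hundeg, hutop]
  set d := u * C (u.leadingCoeff)⁻¹ with hd
  have hdmonic : d.Monic := monic_mul_leadingCoeff_inv hune
  have hdroots : d.roots = u.roots := by
    rw [hd, mul_comm]
    exact roots_C_mul u (inv_ne_zero (by rw [hulc]; positivity))
  have hddeg : d.natDegree = m - 1 := by
    have h1 : d.natDegree ≤ m - 1 := by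
      refine le_trans (natDegree_mul_le) ?_
      simp [natDegree_C, hundeg]
    have h2 : m - 1 ≤ d.natDegree := by
      have := card_roots' d
      rw [hdroots, hcardu] at this
      omega
    omega
  have hsplit : (d.roots.map fun a => X - C a).prod = d :=
    prod_multiset_X_sub_C_of_monic_of_roots_card_eq hdmonic (by rw [hdroots, hcardu, hddeg])
  refine ⟨d.roots.map Neg.neg, by rw [Multiset.card_map, hdroots, hcardu], ?_⟩
  set t := d.roots.map Neg.neg with ht
  have hcardt : Multiset.card t = m - 1 := by rw [ht, Multiset.card_map, hdroots, hcardu]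
  have hd_eq : d = (t.map fun a => X + C a).prod := by
    have hmm2 : (t.map fun a => X + C a) = (d.roots.map fun a => X - C a) := by
      rw [ht, Multiset.map_map]
      apply Multiset.map_congr rfl
      intro a _
      simp [sub_eq_add_neg]
    rw [hmm2, hsplit]
  have hdcoeff : ∀ k ≤ m - 1, d.coeff k = t.esymm (m - 1 - k) := by
    intro k hk
    rw [hd_eq, Multiset.prod_X_add_C_coeff t (by omega : k ≤ Multiset.card t), hcardt]
  intro j hj
  set k := m - 1 - j with hk
  have hdk := hdcoeff k (by omega)
  rw [show m - 1 - k = j by omega] at hdk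
  have hdk2 : d.coeff k = u.coeff k * (m:ℝ)⁻¹ := by rw [hd, coeff_mul_C, hulc]
  have hpk : p.coeff (k + 1) = s.esymm j := by
    rw [hcoeff (k + 1) (by omega), show m - (k+1) = j by omega]
  have hcast : ((k:ℝ) + 1) = ((m - j : ℕ) : ℝ) := by
    have : k + 1 = m - j := by omega
    rw [← this]
    push_cast
    ring
  have hm0 : (m:ℝ) ≠ 0 := by positivity
  rw [← hdk, hdk2, hucoeff, hpk, hcast]
  field_simp

lemma newton_key : ∀ (m : ℕ) (s : Multiset ℝ), Multiset.card s = m → ∀ r : ℕ, 1 ≤ r → r + 1 ≤ m →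
    s.esymm (r-1) / (m.choose (r-1)) * (s.esymm (r+1) / (m.choose (r+1)))
      ≤ (s.esymm r / (m.choose r))^2 := by
  intro m
  induction m using Nat.strong_induction_on with
  | _ m ih =>
    intro s hs r hr1 hrm
    have hm2 : 2 ≤ m := by omega
    rcases eq_or_lt_of_le hrm with htop | hlt
    · -- top case : r + 1 = m
      by_cases h0 : (0:ℝ) ∈ s
      · have hm : s.esymm (r+1) = 0 := by
          rw [htop, ← hs, ms_esymm_card]
          exact Multiset.prod_eq_zero h0
        rw [hm]
        simp only [zero_div, mul_zero]
        positivity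
      · set t := s.map (fun x => x⁻¹) with htdef
        set P := s.prod with hP
        have hcardt : Multiset.card t = m := by rw [htdef, Multiset.card_map, hs]
        have h1 : P * t.esymm 2 = s.esymm (r - 1) := by
          have := ms_reflect s h0 2 (by omega)
          rw [hs, show m - 2 = r - 1 by omega] at this
          exact this
        have h2 : P * t.sum = s.esymm r := by
          have := ms_reflect s h0 1 (by omega)
          rw [hs, show m - 1 = r by omega, ms_esymm_one] at this
          exact this
        have h3 : P = s.esymm (r + 1) := by
          rw [htop, ← hs, ms_esymm_card]
        have hchoose1 : m.choose (r+1) = 1 := by rw [htop, Nat.choose_self]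
        have hchooser : m.choose r = m := by
          rw [show r = m - 1 by omega, Nat.choose_symm (by omega), Nat.choose_one_right]
        have hchooser1 : m.choose (r-1) = m.choose 2 := by
          rw [show r - 1 = m - 2 by omega, Nat.choose_symm (by omega)]
        rw [hchoose1, hchooser, hchooser1, ← h1, ← h2, ← h3]
        have hc2 : (0:ℝ) < (m.choose 2 : ℝ) := by
          have := Nat.choose_pos (show 2 ≤ m by omega)
          exact_mod_cast this
        have hmpos : (0:ℝ) < (m:ℝ) := by positivity
        rw [Nat.cast_one, div_one, div_pow, div_mul_eq_mul_div, div_le_div_iff₀ hc2 (by positivity)]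
        -- (P * t.esymm 2 * P) * m^2 ≤ (P * t.sum)^2 * choose 2
        have hC2 : (2:ℝ) * (m.choose 2 : ℝ) = (m:ℝ) * ((m:ℝ) - 1) := by
          have := two_mul_choose_two m
          have hcast : ((2 * m.choose 2 : ℕ) : ℝ) = ((m * (m-1) : ℕ) : ℝ) := by
            exact Nat.cast_inj.mpr this
          push_cast [Nat.cast_sub (show 1 ≤ m by omega)] at hcast
          linarith
        have hcau := ms_cauchy t
        rw [hcardt] at hcau
        have hss := ms_sq_sum t
        have hQ : (0:ℝ) ≤ (t.map (fun x => x ^ 2)).sum :=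
          Multiset.sum_nonneg (by
            intro x hx
            obtain ⟨y, _, rfl⟩ := Multiset.mem_map.mp hx
            positivity)
        -- key : 2 * e2 * m^2 ≤ m*(m-1)* S^2
        have key2 : 2 * t.esymm 2 * (m:ℝ)^2 ≤ (m:ℝ) * ((m:ℝ) - 1) * t.sum^2 := by
          nlinarith [mul_nonneg (le_of_lt hmpos) (by linarith :
            (0:ℝ) ≤ (m:ℝ) * (t.map (fun x => x ^ 2)).sum - t.sum^2)]
        nlinarith [mul_le_mul_of_nonneg_left key2 (sq_nonneg P), sq_nonneg (P * t.sum)]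
    · -- inductive step
      obtain ⟨t, hcardt, hE⟩ := deriv_esymm s m hs hm2
      have bridge : ∀ j, j ≤ m - 1 →
          s.esymm j / (m.choose j : ℝ) = t.esymm j / ((m-1).choose j : ℝ) := by
        intro j hj
        have hcp : (0:ℝ) < (m.choose j : ℝ) := by
          exact_mod_cast Nat.choose_pos (by omega : j ≤ m)
        have hcp' : (0:ℝ) < ((m-1).choose j : ℝ) := by
          exact_mod_cast Nat.choose_pos (by omega : j ≤ m - 1)
        rw [div_eq_div_iff hcp.ne' hcp'.ne']
        have hmj : (0:ℝ) < ((m - j:ℕ):ℝ) := by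
          have : 0 < m - j := by omega
          exact_mod_cast this
        apply mul_left_cancel₀ (ne_of_gt hmj)
        have hnat : ((m-1).choose j) * m = m.choose j * (m - j) := by
          have h := Nat.choose_mul_succ_eq (m-1) j
          rw [show m - 1 + 1 = m by omega] at h
          exact h
        have hcast : ((m-1).choose j : ℝ) * (m:ℝ) = (m.choose j : ℝ) * ((m - j:ℕ):ℝ) := by
          exact_mod_cast congrArg (Nat.cast : ℕ → ℝ) hnat
        linear_combination (-((m-1).choose j : ℝ)) * hE j hj + t.esymm j * hcast
      rw [bridge (r-1) (by omega), bridge r (by omega), bridge (r+1) (by omega)]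
      exact ih (m-1) (by omega) t hcardt r hr1 (by omega)

/-- The `r`-th elementary symmetric polynomial of `λ₁, …, λₙ`. -/
noncomputable def esymm (n r : ℕ) (l : Fin n → ℝ) : ℝ :=
  ∑ s ∈ (Finset.univ : Finset (Fin n)).powersetCard r, ∏ i ∈ s, l i

/-- Newton's inequality `H_{r-1} H_{r+1} ≤ H_r²` for the normalized elementary
symmetric means of arbitrary real numbers. -/
theorem newton_inequality (n : ℕ) (hn : 1 < n) (l : Fin n → ℝ)
    (H : ℕ → ℝ) (hH : ∀ r, H r = esymm n r l / (n.choose r)) :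
    ∀ r : ℕ, 1 ≤ r → r < n → H (r - 1) * H (r + 1) ≤ (H r) ^ 2 := by
  intro r hr1 hrn
  rw [hH (r-1), hH (r+1), hH r]
  have hes : ∀ j, esymm n j l = ((Finset.univ : Finset (Fin n)).val.map l).esymm j := by
    intro j
    rw [Finset.esymm_map_val]
    rfl
  rw [hes, hes, hes]
  exact newton_key n ((Finset.univ : Finset (Fin n)).val.map l) (by simp) r hr1 (by omega)
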